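/- Let (γ_i)_{i=0}^{n+1} be a linear sequence of geodesics in H^2. Let η_i be the common orthogonal of γ_i and γ_{i+1}, u_i = d(γ_i, γ_{i+1}), and v_i the signed distance along γ_i from η_{i−1} to η_i. Let D = d(γ_0, γ_{n+1}) and suppose u_0, u_n ≤ 1. Then |Σ_{i=1}^n v_i| ≤ D + 2·log D − log u_0 − log u_n + 3. -/

import Mathlib

/- STATEMENT 10 (Lemma 4.4 "marching bound"): Let (γᵢ)_{i=0}^{n+1} be a linear sequence
of geodesics in H², ηᵢ the common orthogonal of γᵢ and γ_{i+1}, uᵢ = d(γᵢ, γ_{i+1}),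
and vᵢ the signed distance along γᵢ from η_{i−1} to ηᵢ.  Let D = d(γ₀, γ_{n+1}) and
suppose u₀, uₙ ≤ 1.  Then |Σ_{i=1}^n vᵢ| ≤ D + 2 log D − log u₀ − log uₙ + 3.

Formalization: as in the companion files, H² is Mathlib's `UpperHalfPlane`, geodesics
are unit-speed lines, and for each j ≤ n the common-orthogonal configuration of γⱼ and
γ_{j+1} — feet at parameters p j and q j, length u j > 0, consistent orientations —
is encoded by the distance formula
cosh d(γⱼ(p j + s), γ_{j+1}(q j + t)) = cosh s cosh t cosh (u j) − sinh s sinh t.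
Then vᵢ = p i − q (i−1) and D is the infimum (attained) of distances between γ₀ and
γ_{n+1}.  Separation is stated via paths. -/

open Real UpperHalfPlane

/-- A unit-speed parametrized complete geodesic in the hyperbolic plane. -/
def IsGeodesicLine (c : ℝ → UpperHalfPlane) : Prop :=
  ∀ s t : ℝ, dist (c s) (c t) = |s - t|


lemma key_alg (ss cs st ct R : ℝ) (hcs : cs^2 = 1 + ss^2) (hct : ct^2 = 1 + st^2)
    (hcs0 : 0 < cs) (hct0 : 0 < ct) (hR : 0 < R) :
    1 + ((R*(ss/cs) - R*(st/ct))^2 + (R/cs - R/ct)^2)/(2 * (R/cs) * (R/ct)) = cs*ct - ss*st := by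
  field_simp
  linear_combination (-ct^2) * hcs + (-cs^2) * hct

lemma dist_eq_of_cosh_eq {a b : ℝ} (ha : 0 ≤ a) (hb : 0 ≤ b)
    (h : Real.cosh a = Real.cosh b) : a = b := by
  have h1 := Real.cosh_le_cosh.mp h.le
  have h2 := Real.cosh_le_cosh.mp h.ge
  rw [abs_of_nonneg ha, abs_of_nonneg hb] at h1 h2
  linarith

lemma circ_geodesic (ce R : ℝ) (hR : 0 < R) :
    IsGeodesicLine (fun s => UpperHalfPlane.mk ⟨ce + R * Real.tanh s, R / Real.cosh s⟩
      (by simpa using div_pos hR (Real.cosh_pos s))) := by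
  intro s t
  have hd2 : ∀ z w : ℂ, dist z w ^ 2 = (z.re - w.re)^2 + (z.im - w.im)^2 := by
    intro z w
    rw [Complex.dist_eq, Complex.sq_norm, Complex.normSq_apply]
    simp [Complex.sub_re, Complex.sub_im]; ring
  have key : Real.cosh (dist
      (UpperHalfPlane.mk ⟨ce + R * Real.tanh s, R / Real.cosh s⟩
        (by simpa using div_pos hR (Real.cosh_pos s)))
      (UpperHalfPlane.mk ⟨ce + R * Real.tanh t, R / Real.cosh t⟩
        (by simpa using div_pos hR (Real.cosh_pos t)))) = Real.cosh (s - t) := by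
    rw [UpperHalfPlane.cosh_dist, Real.cosh_sub]
    rw [coe_mk, coe_mk, mk_im, mk_im, hd2]
    simp only [Real.tanh_eq_sinh_div_cosh]
    have := key_alg (Real.sinh s) (Real.cosh s) (Real.sinh t) (Real.cosh t) R
      (by rw [Real.cosh_sq']) (by rw [Real.cosh_sq']) (Real.cosh_pos s) (Real.cosh_pos t) hR
    rw [← this]
    norm_num
  have := dist_eq_of_cosh_eq dist_nonneg (abs_nonneg (s - t)) (by rw [key, Real.cosh_abs])
  simpa using this

-- generic reparametrization: from a geodesic line and two parameters, get the normalized one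
lemma reparam {c : ℝ → UpperHalfPlane} (hc : IsGeodesicLine c) {a b : ℝ} {z w : UpperHalfPlane}
    (hza : c a = z) (hwb : c b = w) :
    ∃ c' : ℝ → UpperHalfPlane, IsGeodesicLine c' ∧ c' 0 = z ∧ c' (dist z w) = w := by
  subst hza; subst hwb
  set ε : ℝ := if a ≤ b then 1 else -1 with hε
  have hεabs : |ε| = 1 := by
    rcases le_or_gt a b with h | h
    · simp [hε, if_pos h]
    · simp [hε, if_neg (not_le.mpr h)]
  refine ⟨fun s => c (a + ε * s), ?_, ?_, ?_⟩
  · intro s t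
    rw [hc]
    rw [show a + ε * s - (a + ε * t) = ε * (s - t) by ring, abs_mul, hεabs, one_mul]
  · simp
  · have hd : dist (c a) (c b) = |a - b| := hc a b
    rcases le_or_gt a b with h | h
    · have : a + ε * dist (c a) (c b) = b := by
        rw [hd, abs_of_nonpos (by linarith), hε, if_pos h]; ring
      show c (a + ε * dist (c a) (c b)) = c b
      rw [this]
    · have : a + ε * dist (c a) (c b) = b := by
        rw [hd, abs_of_nonneg (by linarith), hε, if_neg (not_le.mpr h)]; ring
      show c (a + ε * dist (c a) (c b)) = c b
      rw [this]

lemma exists_geodesic (z w : UpperHalfPlane) :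
    ∃ c : ℝ → UpperHalfPlane, IsGeodesicLine c ∧ c 0 = z ∧ c (dist z w) = w := by
  by_cases hre : z.re = w.re
  · -- vertical geodesic
    have hvert : IsGeodesicLine (fun s => UpperHalfPlane.mk ⟨z.re, Real.exp s⟩
        (by simpa using Real.exp_pos _)) := by
      intro s t
      have := (isometry_vertical_line z.re).dist_eq s t
      simpa [Real.dist_eq] using this
    have hz : UpperHalfPlane.mk ⟨z.re, Real.exp (Real.log z.im)⟩
        (by simpa using Real.exp_pos _) = z :=
      ext' (by simp) (by simp [Real.exp_log z.im_pos])
    have hw : UpperHalfPlane.mk ⟨z.re, Real.exp (Real.log w.im)⟩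
        (by simpa using Real.exp_pos _) = w :=
      ext' (by simp [hre]) (by simp [Real.exp_log w.im_pos])
    exact reparam hvert hz hw
  · -- circle geodesic
    obtain ⟨ce, hce⟩ : ∃ ce : ℝ, ce * (2*(z.re - w.re)) = z.re^2 + z.im^2 - w.re^2 - w.im^2 :=
      ⟨(z.re^2 + z.im^2 - w.re^2 - w.im^2) / (2*(z.re - w.re)), by
        field_simp [sub_ne_zero.mpr hre]⟩
    have hzw : (z.re - ce)^2 + z.im^2 = (w.re - ce)^2 + w.im^2 := by linear_combination -hce
    have him := z.im_pos
    obtain ⟨R, hR, hR2⟩ : ∃ R : ℝ, 0 < R ∧ R^2 = (z.re - ce)^2 + z.im^2 :=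
      ⟨Real.sqrt ((z.re - ce)^2 + z.im^2), Real.sqrt_pos.mpr (by positivity),
        Real.sq_sqrt (by positivity)⟩
    have hR2' : R^2 = (w.re - ce)^2 + w.im^2 := by rw [hR2, hzw]
    have hgeo := circ_geodesic ce R hR
    have hpt : ∀ v : UpperHalfPlane, R^2 = (v.re - ce)^2 + v.im^2 →
        (fun s => UpperHalfPlane.mk ⟨ce + R * Real.tanh s, R / Real.cosh s⟩
          (by simpa using div_pos hR (Real.cosh_pos s)))
          (Real.arsinh ((v.re - ce)/v.im)) = v := by
      intro v hv
      have hvim := v.im_pos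
      have hch : Real.cosh (Real.arsinh ((v.re - ce)/v.im)) = R / v.im := by
        rw [Real.cosh_arsinh,
          show 1 + ((v.re - ce)/v.im)^2 = (R/v.im)^2 by
            field_simp; linear_combination -hv,
          Real.sqrt_sq (by positivity)]
      have hre' : ce + R * Real.tanh (Real.arsinh ((v.re - ce)/v.im)) = v.re := by
        rw [Real.tanh_eq_sinh_div_cosh, Real.sinh_arsinh, hch]
        field_simp; ring
      have him' : R / Real.cosh (Real.arsinh ((v.re - ce)/v.im)) = v.im := by
        rw [hch]
        field_simp
      exact ext' (by simpa using hre') (by simpa using him')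
    exact reparam hgeo (hpt z hR2) (hpt w hR2')

lemma edge_ineq {d a b u : ℝ} (hd : 0 ≤ d) (hu : 0 < u)
    (h : Real.cosh d = Real.cosh a * Real.cosh b * Real.cosh u - Real.sinh a * Real.sinh b) :
    u ≤ d ∧ |a - b| ≤ d ∧ Real.sinh u * Real.cosh a ≤ Real.sinh d ∧
      Real.sinh u * Real.cosh b ≤ Real.sinh d := by
  have ca := Real.cosh_pos a
  have cb := Real.cosh_pos b
  have cu := Real.cosh_pos u
  have ca1 := Real.one_le_cosh a
  have cb1 := Real.one_le_cosh b
  have cu1 := Real.one_le_cosh u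
  have ha2 : Real.cosh a ^ 2 = 1 + Real.sinh a ^ 2 := Real.cosh_sq' a
  have hb2 : Real.cosh b ^ 2 = 1 + Real.sinh b ^ 2 := Real.cosh_sq' b
  have hu2 : Real.cosh u ^ 2 = 1 + Real.sinh u ^ 2 := Real.cosh_sq' u
  have hd2 : Real.cosh d ^ 2 = 1 + Real.sinh d ^ 2 := Real.cosh_sq' d
  have hsd : 0 ≤ Real.sinh d := by
    rw [← Real.sinh_zero]; exact Real.sinh_le_sinh.mpr hd
  have hsu : 0 < Real.sinh u := by
    rw [← Real.sinh_zero]; exact Real.sinh_lt_sinh.mpr hu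
  have habs : ∀ x : ℝ, |Real.sinh x| ≤ Real.cosh x := fun x => by
    rw [abs_le]; constructor <;> nlinarith [Real.cosh_sq' x, Real.cosh_pos x]
  have hcc : 1 ≤ Real.cosh a * Real.cosh b := one_le_mul_of_one_le_of_one_le ca1 cb1
  have hsq : (Real.sinh a * Real.sinh b)^2 ≤ (Real.cosh a * Real.cosh b - 1)^2 := by
    nlinarith [sq_nonneg (Real.cosh a - Real.cosh b)]
  have key : Real.sinh a * Real.sinh b ≤ Real.cosh a * Real.cosh b - 1 := by
    nlinarith [hsq, hcc]
  refine ⟨?_, ?_, ?_, ?_⟩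
  · have h1 : Real.cosh u ≤ Real.cosh d := by nlinarith [key, cu1, hcc]
    have := Real.cosh_le_cosh.mp h1
    rwa [abs_of_nonneg hu.le, abs_of_nonneg hd] at this
  · have h1 : Real.cosh (a - b) ≤ Real.cosh d := by
      rw [Real.cosh_sub]
      nlinarith
    have h2 := Real.cosh_le_cosh.mp h1
    rwa [abs_of_nonneg hd] at h2
  · have hid : Real.sinh d ^ 2 = (Real.sinh u * Real.cosh a)^2 +
        (Real.cosh a * Real.cosh u * Real.sinh b - Real.sinh a * Real.cosh b)^2 := by
      linear_combination (Real.cosh d + (Real.cosh a * Real.cosh b * Real.cosh u -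
        Real.sinh a * Real.sinh b)) * h - hd2 + ha2 + Real.cosh a ^ 2 * hu2 +
        (Real.cosh a ^ 2 * Real.cosh u ^ 2 - Real.sinh a ^ 2) * hb2
    have hsq2 : (Real.sinh u * Real.cosh a)^2 ≤ Real.sinh d ^ 2 := by
      linarith [hid, sq_nonneg (Real.cosh a * Real.cosh u * Real.sinh b - Real.sinh a * Real.cosh b)]
    have h4 := Real.sqrt_le_sqrt hsq2
    rwa [Real.sqrt_sq (by positivity), Real.sqrt_sq hsd] at h4
  · have hid : Real.sinh d ^ 2 = (Real.sinh u * Real.cosh b)^2 +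
        (Real.cosh b * Real.cosh u * Real.sinh a - Real.sinh b * Real.cosh a)^2 := by
      linear_combination (Real.cosh d + (Real.cosh a * Real.cosh b * Real.cosh u -
        Real.sinh a * Real.sinh b)) * h - hd2 + hb2 + Real.cosh b ^ 2 * hu2 +
        (Real.cosh b ^ 2 * Real.cosh u ^ 2 - Real.sinh b ^ 2) * ha2
    have hsq2 : (Real.sinh u * Real.cosh b)^2 ≤ Real.sinh d ^ 2 := by
      linarith [hid, sq_nonneg (Real.cosh b * Real.cosh u * Real.sinh a - Real.sinh b * Real.cosh a)]
    have h4 := Real.sqrt_le_sqrt hsq2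
    rwa [Real.sqrt_sq (by positivity), Real.sqrt_sq hsd] at h4

lemma endpoint_bound {β d D u : ℝ} (hd0 : 0 ≤ d) (hdD : d ≤ D) (hu : 0 < u) (hu1 : u ≤ 1)
    (huD : u ≤ D) (h : Real.sinh u * Real.cosh β ≤ Real.sinh d) :
    |β| ≤ d + Real.log D + 3/2 - Real.log u := by
  have hD0 : 0 < D := lt_of_lt_of_le hu huD
  have hsu : u ≤ Real.sinh u := (Real.self_lt_sinh_iff.mpr hu).le
  have hcb : 0 < Real.cosh β := Real.cosh_pos β
  have he32 : (2:ℝ) ≤ Real.exp (3/2) := by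
    have h1 : Real.exp 1 ≤ Real.exp (3/2) := Real.exp_le_exp.mpr (by norm_num)
    nlinarith [Real.exp_one_gt_d9]
  have h1 : Real.exp |β| ≤ 2 * Real.cosh β := by
    rw [Real.cosh_eq]
    rcases abs_cases β with ⟨hb, _⟩ | ⟨hb, _⟩ <;> rw [hb] <;> nlinarith [Real.exp_pos β, Real.exp_pos (-β)]
  have h2 : u * Real.exp |β| ≤ 2 * Real.sinh d := by
    calc u * Real.exp |β| ≤ u * (2 * Real.cosh β) := by
          exact mul_le_mul_of_nonneg_left h1 hu.le
      _ ≤ Real.sinh u * (2 * Real.cosh β) := by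
          exact mul_le_mul_of_nonneg_right hsu (by positivity)
      _ ≤ 2 * Real.sinh d := by nlinarith [h]
  have h3 : 2 * Real.sinh d ≤ Real.exp d * (Real.exp (3/2) * D) := by
    rw [Real.sinh_eq]
    rcases le_or_gt 1 (Real.exp (3/2) * D) with hc | hc
    · nlinarith [Real.exp_pos (-d), Real.exp_pos d]
    · have hx : 1 - Real.exp (-(2*d)) ≤ 2*d := by
        nlinarith [Real.add_one_le_exp (-(2*d))]
      have hdd : Real.exp d * Real.exp (-(2*d)) = Real.exp (-d) := by
        rw [← Real.exp_add]; ring_nf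
      nlinarith [Real.exp_pos d, mul_le_mul_of_nonneg_left hx (Real.exp_pos d).le,
        mul_le_mul_of_nonneg_left (show 2*d ≤ 2*D by linarith) (Real.exp_pos d).le,
        mul_le_mul_of_nonneg_left (show (2:ℝ) ≤ Real.exp (3/2) from he32) (mul_nonneg (Real.exp_pos d).le hD0.le)]
  have hR : Real.exp (d + Real.log D + 3/2 - Real.log u) =
      Real.exp d * (Real.exp (3/2) * D) / u := by
    rw [Real.exp_sub, Real.exp_add, Real.exp_add, Real.exp_log hD0, Real.exp_log hu]
    ring
  rw [← Real.exp_le_exp, hR, le_div_iff₀ hu]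
  nlinarith [h2, h3]

theorem stmt10 (n : ℕ) (γ : Fin (n + 2) → ℝ → UpperHalfPlane)
    (hgeo : ∀ i, IsGeodesicLine (γ i))
    (p q u : Fin (n + 1) → ℝ) (hu : ∀ j, 0 < u j)
    (hconn : ∀ j : Fin (n + 1), ∀ s t : ℝ,
      Real.cosh (dist (γ j.castSucc (p j + s)) (γ j.succ (q j + t))) =
        Real.cosh s * Real.cosh t * Real.cosh (u j) - Real.sinh s * Real.sinh t)
    (hsep : ∀ i j k : Fin (n + 2), j < i → i < k → ∀ (s t : ℝ)
      (f : Path (γ j s) (γ k t)), ∃ r, f r ∈ Set.range (γ i))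
    (D : ℝ)
    (hD₁ : ∀ s t : ℝ, D ≤ dist (γ 0 s) (γ (Fin.last (n + 1)) t))
    (hD₂ : ∃ s t : ℝ, dist (γ 0 s) (γ (Fin.last (n + 1)) t) = D)
    (hu₀ : u 0 ≤ 1) (huₙ : u (Fin.last n) ≤ 1) :
    |∑ i : Fin n, (p i.succ - q i.castSucc)| ≤
      D + 2 * Real.log D - Real.log (u 0) - Real.log (u (Fin.last n)) + 3 := by
  classical
  obtain ⟨s₀, t₀, hst⟩ := hD₂
  have hD0 : 0 ≤ D := hst ▸ dist_nonneg
  obtain ⟨c, hc, hc0, hcD⟩ := exists_geodesic (γ 0 s₀) (γ (Fin.last (n + 1)) t₀)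
  rw [hst] at hcD
  have hccont : Continuous c :=
    (Isometry.of_dist_eq (fun s t => by rw [hc s t, Real.dist_eq])).continuous
  -- construct the chain of crossing points
  have chain : ∀ m : ℕ, m ≤ n + 1 → ∃ τ b : ℕ → ℝ, τ 0 = 0 ∧
      (∀ k, k < m → τ k ≤ τ (k + 1)) ∧
      (∀ k, k ≤ m → 0 ≤ τ k ∧ τ k ≤ D ∧
        ∀ h : k < n + 2, c (τ k) = γ ⟨k, h⟩ (b k)) := by
    intro m
    induction m with
    | zero =>
      intro _
      refine ⟨fun _ => 0, fun _ => s₀, rfl, by omega, ?_⟩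
      intro k hk
      obtain rfl : k = 0 := Nat.le_zero.mp hk
      refine ⟨le_refl _, hD0, fun h => ?_⟩
      rw [hc0, show ((0 : Fin (n + 2))) = ⟨0, h⟩ from Fin.ext (by simp)]
    | succ m ih =>
      intro hm
      obtain ⟨τ, b, hτ0, hmono, hfact⟩ := ih (by omega)
      obtain ⟨τm0, τmD, hcm⟩ := hfact m (le_refl m)
      have hm2 : m < n + 2 := by omega
      have hnext : ∃ v y, τ m ≤ v ∧ v ≤ D ∧ c v = γ ⟨m + 1, by omega⟩ y := by
        rcases Nat.lt_or_ge (m + 1) (n + 1) with hlt | hge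
        · -- use separation
          have hsrc : c (τ m + 0 * (D - τ m)) = γ ⟨m, hm2⟩ (b m) := by
            rw [show τ m + 0 * (D - τ m) = τ m by ring]; exact hcm hm2
          have htgt : c (τ m + 1 * (D - τ m)) = γ (Fin.last (n + 1)) t₀ := by
            rw [show τ m + 1 * (D - τ m) = D by ring]; exact hcD
          let f : Path (γ ⟨m, hm2⟩ (b m)) (γ (Fin.last (n + 1)) t₀) :=
            { toFun := fun r => c (τ m + r.1 * (D - τ m))
              continuous_toFun := hccont.comp (by continuity)
              source' := hsrc
              target' := htgt }
          obtain ⟨r, hr⟩ := hsep ⟨m + 1, by omega⟩ ⟨m, hm2⟩ (Fin.last (n + 1))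
            (Fin.mk_lt_mk.mpr (by omega))
            (by rw [Fin.lt_def]; simp only [Fin.val_last]; exact hlt) (b m) t₀ f
          obtain ⟨y, hy⟩ := hr
          refine ⟨τ m + r.1 * (D - τ m), y, ?_, ?_, ?_⟩
          · nlinarith [r.2.1, r.2.2]
          · nlinarith [r.2.1, r.2.2]
          · exact hy.symm
        · have hmn : m + 1 = n + 1 := by omega
          refine ⟨D, t₀, τmD, le_refl D, ?_⟩
          rw [hcD]
          congr 1
          exact Fin.ext (by simp [hmn])
      obtain ⟨v, y, hv1, hv2, hv3⟩ := hnext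
      refine ⟨fun k => if k = m + 1 then v else τ k,
        fun k => if k = m + 1 then y else b k, ?_, ?_, ?_⟩
      · show (if 0 = m + 1 then v else τ 0) = 0
        rw [if_neg (by omega)]; exact hτ0
      · intro k hk
        rcases Nat.lt_or_ge k m with hkm | hkm
        · show (if k = m + 1 then v else τ k) ≤ (if k + 1 = m + 1 then v else τ (k + 1))
          rw [if_neg (by omega), if_neg (by omega)]
          exact hmono k hkm
        · show (if k = m + 1 then v else τ k) ≤ (if k + 1 = m + 1 then v else τ (k + 1))
          obtain rfl : m = k := by omega
          rw [if_neg (by omega), if_pos rfl]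
          exact hv1
      · intro k hk
        rcases Nat.lt_or_ge k (m + 1) with hkm | hkm
        · obtain ⟨h1, h2, h3⟩ := hfact k (by omega)
          refine ⟨?_, ?_, ?_⟩
          · show 0 ≤ (if k = m + 1 then v else τ k)
            rw [if_neg (by omega)]; exact h1
          · show (if k = m + 1 then v else τ k) ≤ D
            rw [if_neg (by omega)]; exact h2
          · intro h
            show c (if k = m + 1 then v else τ k) = γ ⟨k, h⟩ (if k = m + 1 then y else b k)
            rw [if_neg (by omega), if_neg (by omega)]
            exact h3 h
        · have hkm1 : k = m + 1 := by omega
          refine ⟨?_, ?_, ?_⟩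
          · show 0 ≤ (if k = m + 1 then v else τ k)
            rw [if_pos hkm1]; exact le_trans τm0 hv1
          · show (if k = m + 1 then v else τ k) ≤ D
            rw [if_pos hkm1]; exact hv2
          · intro h
            show c (if k = m + 1 then v else τ k) = γ ⟨k, h⟩ (if k = m + 1 then y else b k)
            rw [if_pos hkm1, if_pos hkm1]
            subst hkm1
            exact hv3
  obtain ⟨τ, b, hτ0, hmono, hfact⟩ := chain (n + 1) le_rfl
  -- global monotonicity
  have hmono' : ∀ k, k ≤ n + 1 → ∀ j, j ≤ k → τ j ≤ τ k := by
    intro k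
    induction k with
    | zero =>
      intro _ j hj
      obtain rfl : j = 0 := Nat.le_zero.mp hj
      exact le_refl _
    | succ k ihk =>
      intro hk j hj
      rcases Nat.lt_or_ge j (k + 1) with h | h
      · exact le_trans (ihk (by omega) j (by omega)) (hmono k (by omega))
      · obtain rfl : j = k + 1 := by omega
        exact le_refl _
  -- distances along the chain
  have hdd : ∀ k, k ≤ n → 0 ≤ τ (k + 1) - τ k := by
    intro k hk; have := hmono k (by omega); linarith
  have hdist : ∀ k, (hk : k ≤ n) →
      dist (γ ⟨k, by omega⟩ (b k)) (γ ⟨k + 1, by omega⟩ (b (k + 1))) = τ (k + 1) - τ k := by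
    intro k hk
    rw [← (hfact k (by omega)).2.2 (by omega), ← (hfact (k + 1) (by omega)).2.2 (by omega), hc]
    rw [abs_of_nonpos (by linarith [hdd k hk])]
    ring
  -- edge equations from hconn
  have hedge : ∀ k, (hk : k ≤ n) →
      Real.cosh (τ (k + 1) - τ k) =
        Real.cosh (b k - p ⟨k, by omega⟩) * Real.cosh (b (k + 1) - q ⟨k, by omega⟩) *
          Real.cosh (u ⟨k, by omega⟩) -
        Real.sinh (b k - p ⟨k, by omega⟩) * Real.sinh (b (k + 1) - q ⟨k, by omega⟩) := by
    intro k hk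
    have hE := hconn ⟨k, by omega⟩ (b k - p ⟨k, by omega⟩) (b (k + 1) - q ⟨k, by omega⟩)
    rw [show p ⟨k, by omega⟩ + (b k - p ⟨k, by omega⟩) = b k by ring,
      show q ⟨k, by omega⟩ + (b (k + 1) - q ⟨k, by omega⟩) = b (k + 1) by ring] at hE
    rw [show (Fin.castSucc (⟨k, by omega⟩ : Fin (n + 1)) : Fin (n + 2)) = ⟨k, by omega⟩ from rfl,
      show (Fin.succ (⟨k, by omega⟩ : Fin (n + 1)) : Fin (n + 2)) = ⟨k + 1, by omega⟩ from rfl,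
      hdist k hk] at hE
    exact hE
  have hedge' : ∀ k, (hk : k ≤ n) →
      u ⟨k, by omega⟩ ≤ τ (k + 1) - τ k ∧
      |(b k - p ⟨k, by omega⟩) - (b (k + 1) - q ⟨k, by omega⟩)| ≤ τ (k + 1) - τ k ∧
      Real.sinh (u ⟨k, by omega⟩) * Real.cosh (b k - p ⟨k, by omega⟩) ≤
        Real.sinh (τ (k + 1) - τ k) ∧
      Real.sinh (u ⟨k, by omega⟩) * Real.cosh (b (k + 1) - q ⟨k, by omega⟩) ≤
        Real.sinh (τ (k + 1) - τ k) :=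
    fun k hk => edge_ineq (hdd k hk) (hu _) (hedge k hk)
  -- index normalizations
  have hidx0 : (⟨0, by omega⟩ : Fin (n + 1)) = 0 := Fin.ext (by simp)
  have hidxn : (⟨n, by omega⟩ : Fin (n + 1)) = Fin.last n := rfl
  -- basic distance facts
  have hτtop : τ (n + 1) ≤ D := (hfact (n + 1) le_rfl).2.1
  have hd0D : τ 1 - τ 0 ≤ D := by
    have := hmono' (n + 1) le_rfl 1 (by omega); rw [hτ0]; linarith
  have hdnD : τ (n + 1) - τ n ≤ D := by
    have := (hfact n (by omega)).1; linarith
  have huD0 : u 0 ≤ D := by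
    have h1 := (hedge' 0 (by omega)).1
    rw [hidx0] at h1
    rw [hτ0] at h1
    have h2 := hmono' (n + 1) le_rfl 1 (by omega)
    linarith [hτtop]
  have huDn : u (Fin.last n) ≤ D := by
    have h1 := (hedge' n (by omega)).1
    rw [hidxn] at h1
    linarith [hdnD]
  have hDpos : 0 < D := lt_of_lt_of_le (hu 0) huD0
  -- endpoint bounds
  have hB0 : |b 1 - q ⟨0, by omega⟩| ≤ (τ 1 - τ 0) + Real.log D + 3 / 2 - Real.log (u 0) := by
    have h4 := (hedge' 0 (by omega)).2.2.2
    rw [hidx0] at h4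
    exact endpoint_bound (hdd 0 (by omega)) hd0D (hu 0) hu₀ huD0 h4
  have hAn : |b n - p ⟨n, by omega⟩| ≤ (τ (n + 1) - τ n) + Real.log D + 3 / 2 -
      Real.log (u (Fin.last n)) := by
    have h3 := (hedge' n (by omega)).2.2.1
    rw [hidxn] at h3
    exact endpoint_bound (hdd n (by omega)) hdnD (hu _) huₙ huDn h3
  -- now case on n
  rcases Nat.eq_zero_or_pos n with hn0 | hnpos
  · subst hn0
    simp only [Finset.univ_eq_empty, Finset.sum_empty, abs_zero]
    have hlog : Real.log (u 0) ≤ Real.log D := Real.log_le_log (hu 0) huD0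
    have hlast : u (Fin.last 0) = u 0 := by norm_num [Fin.last]
    rw [hlast]
    linarith
  · obtain ⟨m, rfl⟩ : ∃ m, n = m + 1 := ⟨n - 1, by omega⟩
    obtain ⟨A, hAk⟩ : ∃ A : ℕ → ℝ, ∀ k (h : k < m + 2), A k = b k - p ⟨k, h⟩ :=
      ⟨fun k => if h : k < m + 2 then b k - p ⟨k, h⟩ else 0, fun k h => dif_pos h⟩
    obtain ⟨B, hBk⟩ : ∃ B : ℕ → ℝ, ∀ k (h : k < m + 2), B k = b (k + 1) - q ⟨k, h⟩ :=
      ⟨fun k => if h : k < m + 2 then b (k + 1) - q ⟨k, h⟩ else 0, fun k h => dif_pos h⟩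
    have hsum : (∑ i : Fin (m + 1), (p i.succ - q i.castSucc)) =
        ∑ k ∈ Finset.range (m + 1), (B k - A (k + 1)) := by
      rw [← Fin.sum_univ_eq_sum_range (fun k => B k - A (k + 1)) (m + 1)]
      apply Finset.sum_congr rfl
      intro i _
      rw [hBk i.1 (Nat.lt_succ_of_lt i.isLt), hAk (i.1 + 1) (Nat.succ_lt_succ i.isLt)]
      rw [show p i.succ = p ⟨i.1 + 1, Nat.succ_lt_succ i.isLt⟩ from rfl,
        show q i.castSucc = q ⟨i.1, Nat.lt_succ_of_lt i.isLt⟩ from rfl]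
      ring
    have hdec : ∑ k ∈ Finset.range (m + 1), (B k - A (k + 1)) =
        (B 0 - A (m + 1)) + ∑ k ∈ Finset.range m, (B (k + 1) - A (k + 1)) := by
      rw [Finset.sum_sub_distrib, Finset.sum_range_succ' (fun k => B k) m,
        Finset.sum_range_succ (fun k => A (k + 1)) m, Finset.sum_sub_distrib]
      ring
    have hmid : ∀ k, k < m → |B (k + 1) - A (k + 1)| ≤ τ (k + 2) - τ (k + 1) := by
      intro k hk
      have h2 := (hedge' (k + 1) (by omega)).2.1
      rw [hBk (k + 1) (by omega), hAk (k + 1) (by omega), abs_sub_comm]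
      exact h2
    have hmids : |∑ k ∈ Finset.range m, (B (k + 1) - A (k + 1))| ≤ τ (m + 1) - τ 1 := by
      calc |∑ k ∈ Finset.range m, (B (k + 1) - A (k + 1))|
          ≤ ∑ k ∈ Finset.range m, |B (k + 1) - A (k + 1)| :=
            Finset.abs_sum_le_sum_abs _ _
        _ ≤ ∑ k ∈ Finset.range m, (τ (k + 2) - τ (k + 1)) :=
            Finset.sum_le_sum (fun k hk => hmid k (Finset.mem_range.mp hk))
        _ = τ (m + 1) - τ 1 := by
            have h3 := Finset.sum_range_sub (fun k => τ (k + 1)) m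
            simpa using h3
    have e1 : |B 0| ≤ (τ 1 - τ 0) + Real.log D + 3 / 2 - Real.log (u 0) := by
      rw [hBk 0 (by omega)]
      exact hB0
    have e2 : |A (m + 1)| ≤ (τ (m + 2) - τ (m + 1)) + Real.log D + 3 / 2 -
        Real.log (u (Fin.last (m + 1))) := by
      rw [hAk (m + 1) (by omega)]
      exact hAn
    have hτtop2 : τ (m + 2) ≤ D := hτtop
    rw [hsum, hdec]
    have habs : |(B 0 - A (m + 1)) + ∑ k ∈ Finset.range m, (B (k + 1) - A (k + 1))| ≤
        |B 0| + |A (m + 1)| + |∑ k ∈ Finset.range m, (B (k + 1) - A (k + 1))| := by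
      calc |(B 0 - A (m + 1)) + ∑ k ∈ Finset.range m, (B (k + 1) - A (k + 1))|
          ≤ |B 0 - A (m + 1)| + |∑ k ∈ Finset.range m, (B (k + 1) - A (k + 1))| := abs_add_le _ _
        _ ≤ |B 0| + |A (m + 1)| + |∑ k ∈ Finset.range m, (B (k + 1) - A (k + 1))| := by
            linarith [abs_sub (B 0) (A (m + 1))]
    linarith [e1, e2, hmids, habs, hτ0]
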